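/- Define f₀ : [0, m] → ℝ piecewise by: f₀(x) = −x on [0, m/16); f₀(x) = (8/m)(x − m/8)² − 3m/32 on [m/16, 3m/16); f₀(x) = −(5m/16)·exp((5m/16)/(x − m/2) + 1) + m/4 on [3m/16, m/2); f₀(m/2) = m/4; f₀(x) = (5m/16)·exp(−(5m/16)/(x − m/2) + 1) + m/4 on (m/2, 13m/16); f₀(x) = −(8/m)(x − 7m/8)² + 19m/32 on [13m/16, 15m/16); f₀(x) = −x + 3m/2 on [15m/16, m]. Then f₀ is continuous and differentiable on [0, m], with f₀'(0) = f₀'(m) = −1, f₀ is bounded below by −3m/32, and f₀' is locally Lipschitz continuous on [0, m]. -/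

import Mathlib

open Set

/-- Auxiliary: single Taylor term bound for exp. -/
lemma factExp (k : ℕ) {u : ℝ} (hu : 1 ≤ u) : u ^ (k+1) / (k+1).factorial ≤ Real.exp u := by
  have h0 : (0:ℝ) ≤ u := by linarith
  calc u ^ (k+1) / (k+1).factorial
      ≤ ∑ i ∈ Finset.range (k+2), u ^ i / i.factorial := by
        refine Finset.single_le_sum (f := fun i => u ^ i / (i.factorial:ℝ)) ?_
          (Finset.self_mem_range_succ (k+1))
        intro i _; positivity
    _ ≤ Real.exp u := Real.sum_le_exp_of_nonneg h0 _

lemma pow_exp_bound (k : ℕ) {u : ℝ} (hu : 1 ≤ u) :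
    u ^ k * Real.exp (1 - u) ≤ 3 * (k+1).factorial / u := by
  have hu0 : (0:ℝ) < u := by linarith
  have hf := factExp k hu
  have hfp : (0:ℝ) < (k+1).factorial := by positivity
  have hup : (0:ℝ) < u ^ (k+1) := by positivity
  have hexp : (0:ℝ) < Real.exp u := Real.exp_pos u
  have he : Real.exp 1 ≤ 3 := by
    have := Real.exp_one_lt_d9; linarith
  have h2 : Real.exp (1 - u) ≤ 3 * (k+1).factorial / u ^ (k+1) := by
    rw [Real.exp_sub, div_le_div_iff₀ hexp hup]
    rw [div_le_iff₀ hfp] at hf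
    have hep : (0:ℝ) < Real.exp 1 := Real.exp_pos 1
    calc Real.exp 1 * u ^ (k+1) ≤ 3 * u ^ (k+1) := by nlinarith
      _ ≤ 3 * (Real.exp u * (k+1).factorial) := by nlinarith
      _ = 3 * (k+1).factorial * Real.exp u := by ring
  calc u ^ k * Real.exp (1 - u) ≤ u ^ k * (3 * (k+1).factorial / u ^ (k+1)) :=
        mul_le_mul_of_nonneg_left h2 (by positivity)
    _ = 3 * (k+1).factorial / u := by
        field_simp
        ring

lemma bnd2 {u : ℝ} (hu : 1 ≤ u) : u ^ 2 * Real.exp (1 - u) ≤ 18 / u := by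
  have h := pow_exp_bound 2 hu
  norm_num [Nat.factorial] at h
  linarith

lemma bnd3 {u : ℝ} (hu : 1 ≤ u) : u ^ 3 * Real.exp (1 - u) ≤ 72 / u := by
  have h := pow_exp_bound 3 hu
  norm_num [Nat.factorial] at h
  linarith

lemma bnd4 {u : ℝ} (hu : 1 ≤ u) : u ^ 4 * Real.exp (1 - u) ≤ 360 / u := by
  have h := pow_exp_bound 4 hu
  norm_num [Nat.factorial] at h
  linarith


section Key
variable {c t : ℝ}

lemma usetup (hc : 0 < c) (ht0 : -c ≤ t) (ht1 : t < 0) :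
    ∃ u : ℝ, 1 ≤ u ∧ 0 < u ∧ c / t = -u ∧ t = -(c/u) ∧ t ^ 2 = c ^ 2 / u ^ 2 := by
  have hnt : 0 < -t := by linarith
  refine ⟨c / (-t), ?_, by positivity, ?_, ?_, ?_⟩
  · rw [le_div_iff₀ hnt]; linarith
  · rw [div_neg, neg_neg]
  · rw [div_neg]; field_simp
  · rw [div_neg]; field_simp

lemma keyA (hc : 0 < c) (ht0 : -c ≤ t) (ht1 : t < 0) :
    c * Real.exp (c / t + 1) ≤ 18 / c * t ^ 2 := by
  obtain ⟨u, hu, hu0, hct, htu, ht2⟩ := usetup hc ht0 ht1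
  rw [hct, ht2]
  have hb := bnd2 hu
  have hE := Real.exp_pos (1 - u)
  have h18 : 18 / c * (c ^ 2 / u ^ 2) = 18 * c / u ^ 2 := by field_simp
  rw [h18, le_div_iff₀ (by positivity)]
  rw [show -u + 1 = 1 - u from by ring]
  have hb' : u ^ 2 * Real.exp (1-u) ≤ 18 := le_trans hb (div_le_self (by norm_num) hu)
  nlinarith

lemma keyB (hc : 0 < c) (ht0 : -c ≤ t) (ht1 : t < 0) :
    c ^ 2 / t ^ 2 * Real.exp (c / t + 1) ≤ 72 / c * (-t) := by
  obtain ⟨u, hu, hu0, hct, htu, ht2⟩ := usetup hc ht0 ht1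
  rw [hct, ht2]
  have h1 : c ^ 2 / (c ^ 2 / u ^ 2) = u ^ 2 := by field_simp
  rw [h1, show -t = c / u from by rw [htu]; ring,
    show 72 / c * (c / u) = 72 / u from by field_simp,
    show -u + 1 = 1 - u from by ring, le_div_iff₀ hu0]
  have hb := bnd3 hu
  rw [le_div_iff₀ hu0] at hb
  have hE := Real.exp_pos (1 - u)
  nlinarith

lemma keyC (hc : 0 < c) (ht0 : -c ≤ t) (ht1 : t < 0) :
    c ^ 2 * Real.exp (c / t + 1) * |2 / t ^ 3 + c / t ^ 4| ≤ 504 / c := by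
  obtain ⟨u, hu, hu0, hct, htu, ht2⟩ := usetup hc ht0 ht1
  have hc0 : c ≠ 0 := ne_of_gt hc
  have hu0' : u ≠ 0 := ne_of_gt hu0
  have h3 : t ^ 3 = -(c ^ 3 / u ^ 3) := by rw [htu]; ring
  have h4 : t ^ 4 = c ^ 4 / u ^ 4 := by rw [htu]; ring
  have heq : 2 / t ^ 3 + c / t ^ 4 = (u ^ 4 - 2 * u ^ 3) / c ^ 3 := by
    rw [h3, h4]; field_simp; ring
  rw [hct, heq]
  have hu3 : (0:ℝ) ≤ u ^ 3 := by positivity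
  have hu4 : (0:ℝ) ≤ u ^ 4 := by positivity
  have habs : |(u ^ 4 - 2 * u ^ 3) / c ^ 3| ≤ (u ^ 4 + 2 * u ^ 3) / c ^ 3 := by
    rw [abs_div, abs_of_pos (by positivity : (0:ℝ) < c ^ 3)]
    gcongr
    apply abs_le.mpr; constructor <;> nlinarith
  have hE := Real.exp_pos (1 - u)
  have hnum : u ^ 4 * Real.exp (1-u) + 2 * (u ^ 3 * Real.exp (1-u)) ≤ 504 := by
    have hb4 := le_trans (bnd4 hu) (div_le_self (by norm_num) hu)
    have hb3 := le_trans (bnd3 hu) (div_le_self (by norm_num) hu)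
    linarith
  calc c ^ 2 * Real.exp (-u + 1) * |(u ^ 4 - 2 * u ^ 3) / c ^ 3|
      ≤ c ^ 2 * Real.exp (-u + 1) * ((u ^ 4 + 2 * u ^ 3) / c ^ 3) := by
        apply mul_le_mul_of_nonneg_left habs (by positivity)
    _ = (u ^ 4 * Real.exp (1-u) + 2 * (u ^ 3 * Real.exp (1-u))) / c := by
        rw [show -u + 1 = 1 - u from by ring]; field_simp
    _ ≤ 504 / c := by gcongr
end Key

/-- The piecewise bump-like function `f₀` on `[0, m]`. -/
noncomputable def f0 (m : ℝ) (x : ℝ) : ℝ :=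
  if x < m / 16 then -x
  else if x < 3 * m / 16 then (8 / m) * (x - m / 8) ^ 2 - 3 * m / 32
  else if x < m / 2 then -(5 * m / 16) * Real.exp ((5 * m / 16) / (x - m / 2) + 1) + m / 4
  else if x = m / 2 then m / 4
  else if x < 13 * m / 16 then (5 * m / 16) * Real.exp (-(5 * m / 16) / (x - m / 2) + 1) + m / 4
  else if x < 15 * m / 16 then (-8 / m) * (x - 7 * m / 8) ^ 2 + 19 * m / 32
  else -x + 3 * m / 2

noncomputable def g0 (m : ℝ) (x : ℝ) : ℝ :=
  if x < m / 16 then -1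
  else if x < 3 * m / 16 then (16 / m) * (x - m / 8)
  else if x < m / 2 then (5 * m / 16) ^ 2 / (x - m / 2) ^ 2 * Real.exp ((5 * m / 16) / (x - m / 2) + 1)
  else if x = m / 2 then 0
  else if x < 13 * m / 16 then (5 * m / 16) ^ 2 / (x - m / 2) ^ 2 * Real.exp (-(5 * m / 16) / (x - m / 2) + 1)
  else if x < 15 * m / 16 then (-16 / m) * (x - 7 * m / 8)
  else -1

section EqLemmas
variable {m x : ℝ}

lemma f0_eq1 (h : x < m / 16) : f0 m x = -x := by rw [f0, if_pos h]
lemma f0_eq2 (h1 : m / 16 ≤ x) (h2 : x < 3 * m / 16) :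
    f0 m x = (8 / m) * (x - m / 8) ^ 2 - 3 * m / 32 := by
  rw [f0, if_neg (not_lt.2 h1), if_pos h2]
lemma f0_eq3 (hm : 0 < m) (h1 : 3 * m / 16 ≤ x) (h2 : x < m / 2) :
    f0 m x = -(5 * m / 16) * Real.exp ((5 * m / 16) / (x - m / 2) + 1) + m / 4 := by
  rw [f0, if_neg (by push_neg; linarith), if_neg (not_lt.2 h1), if_pos h2]
lemma f0_mid (hm : 0 < m) : f0 m (m / 2) = m / 4 := by
  rw [f0, if_neg (by push_neg; linarith), if_neg (by push_neg; linarith),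
    if_neg (lt_irrefl _), if_pos rfl]
lemma f0_eq4 (hm : 0 < m) (h1 : m / 2 < x) (h2 : x < 13 * m / 16) :
    f0 m x = (5 * m / 16) * Real.exp (-(5 * m / 16) / (x - m / 2) + 1) + m / 4 := by
  rw [f0, if_neg (by push_neg; linarith), if_neg (by push_neg; linarith),
    if_neg (not_lt.2 h1.le), if_neg (ne_of_gt h1), if_pos h2]
lemma f0_eq5 (hm : 0 < m) (h1 : 13 * m / 16 ≤ x) (h2 : x < 15 * m / 16) :
    f0 m x = (-8 / m) * (x - 7 * m / 8) ^ 2 + 19 * m / 32 := by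
  rw [f0, if_neg (by push_neg; linarith), if_neg (by push_neg; linarith),
    if_neg (by push_neg; linarith), if_neg (by intro h; rw [h] at h1; linarith),
    if_neg (not_lt.2 h1), if_pos h2]
lemma f0_eq6 (hm : 0 < m) (h1 : 15 * m / 16 ≤ x) : f0 m x = -x + 3 * m / 2 := by
  rw [f0, if_neg (by push_neg; linarith), if_neg (by push_neg; linarith),
    if_neg (by push_neg; linarith), if_neg (by intro h; rw [h] at h1; linarith),
    if_neg (by push_neg; linarith), if_neg (not_lt.2 h1)]

lemma g0_eq1 (h : x < m / 16) : g0 m x = -1 := by rw [g0, if_pos h]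
lemma g0_eq2 (h1 : m / 16 ≤ x) (h2 : x < 3 * m / 16) :
    g0 m x = (16 / m) * (x - m / 8) := by
  rw [g0, if_neg (not_lt.2 h1), if_pos h2]
lemma g0_eq3 (hm : 0 < m) (h1 : 3 * m / 16 ≤ x) (h2 : x < m / 2) :
    g0 m x = (5 * m / 16) ^ 2 / (x - m / 2) ^ 2 * Real.exp ((5 * m / 16) / (x - m / 2) + 1) := by
  rw [g0, if_neg (by push_neg; linarith), if_neg (not_lt.2 h1), if_pos h2]
lemma g0_mid (hm : 0 < m) : g0 m (m / 2) = 0 := by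
  rw [g0, if_neg (by push_neg; linarith), if_neg (by push_neg; linarith),
    if_neg (lt_irrefl _), if_pos rfl]
lemma g0_eq4 (hm : 0 < m) (h1 : m / 2 < x) (h2 : x < 13 * m / 16) :
    g0 m x = (5 * m / 16) ^ 2 / (x - m / 2) ^ 2 * Real.exp (-(5 * m / 16) / (x - m / 2) + 1) := by
  rw [g0, if_neg (by push_neg; linarith), if_neg (by push_neg; linarith),
    if_neg (not_lt.2 h1.le), if_neg (ne_of_gt h1), if_pos h2]
lemma g0_eq5 (hm : 0 < m) (h1 : 13 * m / 16 ≤ x) (h2 : x < 15 * m / 16) :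
    g0 m x = (-16 / m) * (x - 7 * m / 8) := by
  rw [g0, if_neg (by push_neg; linarith), if_neg (by push_neg; linarith),
    if_neg (by push_neg; linarith), if_neg (by intro h; rw [h] at h1; linarith),
    if_neg (not_lt.2 h1), if_pos h2]
lemma g0_eq6 (hm : 0 < m) (h1 : 15 * m / 16 ≤ x) : g0 m x = -1 := by
  rw [g0, if_neg (by push_neg; linarith), if_neg (by push_neg; linarith),
    if_neg (by push_neg; linarith), if_neg (by intro h; rw [h] at h1; linarith),
    if_neg (by push_neg; linarith), if_neg (not_lt.2 h1)]
end EqLemmas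

section PieceLemmas
variable {m : ℝ} (hm : 0 < m)
include hm

lemma f0_P1 : ∀ x ∈ Icc 0 (m / 16), f0 m x = -x := by
  rintro x ⟨hx0, hx1⟩
  rcases hx1.lt_or_eq with h | h
  · exact f0_eq1 h
  · subst h
    rw [f0_eq2 le_rfl (by linarith)]
    field_simp
    ring

lemma f0_P2 : ∀ x ∈ Icc (m / 16) (3 * m / 16),
    f0 m x = (8 / m) * (x - m / 8) ^ 2 - 3 * m / 32 := by
  rintro x ⟨hx0, hx1⟩
  rcases hx1.lt_or_eq with h | h
  · exact f0_eq2 hx0 h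
  · subst h
    rw [f0_eq3 hm le_rfl (by linarith)]
    rw [show (5 * m / 16) / (3 * m / 16 - m / 2) + 1 = 0 by
      rw [show 3 * m / 16 - m / 2 = -(5 * m / 16) by ring, div_neg,
        div_self (by positivity : (5:ℝ) * m / 16 ≠ 0)]; ring]
    rw [Real.exp_zero]
    field_simp
    ring

lemma f0_P4 : ∀ x ∈ Ioc (m / 2) (13 * m / 16),
    f0 m x = (5 * m / 16) * Real.exp (-(5 * m / 16) / (x - m / 2) + 1) + m / 4 := by
  rintro x ⟨hx0, hx1⟩
  rcases hx1.lt_or_eq with h | h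
  · exact f0_eq4 hm hx0 h
  · subst h
    rw [f0_eq5 hm le_rfl (by linarith)]
    rw [show -(5 * m / 16) / (13 * m / 16 - m / 2) + 1 = 0 by
      rw [show 13 * m / 16 - m / 2 = 5 * m / 16 by ring, neg_div,
        div_self (by positivity : (5:ℝ) * m / 16 ≠ 0)]; ring]
    rw [Real.exp_zero]
    field_simp
    ring

lemma f0_P5 : ∀ x ∈ Icc (13 * m / 16) (15 * m / 16),
    f0 m x = (-8 / m) * (x - 7 * m / 8) ^ 2 + 19 * m / 32 := by
  rintro x ⟨hx0, hx1⟩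
  rcases hx1.lt_or_eq with h | h
  · exact f0_eq5 hm hx0 h
  · subst h
    rw [f0_eq6 hm le_rfl]
    field_simp
    ring

lemma f0_P6 : ∀ x ∈ Icc (15 * m / 16) m, f0 m x = -x + 3 * m / 2 := by
  rintro x ⟨hx0, _⟩
  exact f0_eq6 hm hx0

lemma g0_P1 : ∀ x ∈ Icc 0 (m / 16), g0 m x = -1 := by
  rintro x ⟨hx0, hx1⟩
  rcases hx1.lt_or_eq with h | h
  · exact g0_eq1 h
  · subst h
    rw [g0_eq2 le_rfl (by linarith)]
    field_simp
    ring

lemma g0_P2 : ∀ x ∈ Icc (m / 16) (3 * m / 16), g0 m x = (16 / m) * (x - m / 8) := by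
  rintro x ⟨hx0, hx1⟩
  rcases hx1.lt_or_eq with h | h
  · exact g0_eq2 hx0 h
  · subst h
    rw [g0_eq3 hm le_rfl (by linarith)]
    rw [show (5 * m / 16) / (3 * m / 16 - m / 2) + 1 = 0 by
      rw [show 3 * m / 16 - m / 2 = -(5 * m / 16) by ring, div_neg,
        div_self (by positivity : (5:ℝ) * m / 16 ≠ 0)]; ring]
    rw [Real.exp_zero]
    rw [show 3 * m / 16 - m / 2 = -(5 * m / 16) by ring]
    field_simp
    ring

lemma g0_P4 : ∀ x ∈ Ioc (m / 2) (13 * m / 16),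
    g0 m x = (5 * m / 16) ^ 2 / (x - m / 2) ^ 2 * Real.exp (-(5 * m / 16) / (x - m / 2) + 1) := by
  rintro x ⟨hx0, hx1⟩
  rcases hx1.lt_or_eq with h | h
  · exact g0_eq4 hm hx0 h
  · subst h
    rw [g0_eq5 hm le_rfl (by linarith)]
    rw [show -(5 * m / 16) / (13 * m / 16 - m / 2) + 1 = 0 by
      rw [show 13 * m / 16 - m / 2 = 5 * m / 16 by ring, neg_div,
        div_self (by positivity : (5:ℝ) * m / 16 ≠ 0)]; ring]
    rw [Real.exp_zero]
    rw [show 13 * m / 16 - m / 2 = 5 * m / 16 by ring]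
    field_simp
    ring

lemma g0_P5 : ∀ x ∈ Icc (13 * m / 16) (15 * m / 16),
    g0 m x = (-16 / m) * (x - 7 * m / 8) := by
  rintro x ⟨hx0, hx1⟩
  rcases hx1.lt_or_eq with h | h
  · exact g0_eq5 hm hx0 h
  · subst h
    rw [g0_eq6 hm le_rfl]
    field_simp
    ring

lemma g0_P6 : ∀ x ∈ Icc (15 * m / 16) m, g0 m x = -1 := by
  rintro x ⟨hx0, _⟩
  exact g0_eq6 hm hx0
end PieceLemmas

-- gluing lemmas
lemma derivGlue {f g : ℝ → ℝ} {a b c : ℝ} (hab : a ≤ b) (hbc : b ≤ c)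
    (h1 : ∀ x ∈ Icc a b, HasDerivWithinAt f (g x) (Icc a b) x)
    (h2 : ∀ x ∈ Icc b c, HasDerivWithinAt f (g x) (Icc b c) x) :
    ∀ x ∈ Icc a c, HasDerivWithinAt f (g x) (Icc a c) x := by
  intro x hx
  rw [← Icc_union_Icc_eq_Icc hab hbc]
  by_cases hx1 : x ∈ Icc a b
  · by_cases hx2 : x ∈ Icc b c
    · exact (h1 x hx1).union (h2 x hx2)
    · refine (h1 x hx1).union ?_
      have : HasFDerivWithinAt f (ContinuousLinearMap.smulRight (1 : ℝ →L[ℝ] ℝ) (g x)) (Icc b c) x :=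
        HasFDerivWithinAt.of_notMem_closure (by rwa [IsClosed.closure_eq isClosed_Icc])
      simpa using this.hasDerivWithinAt
  · have hx2 : x ∈ Icc b c := by
      simp only [mem_Icc] at *
      push_neg at hx1
      exact ⟨le_of_lt (hx1 hx.1), hx.2⟩
    refine HasDerivWithinAt.union ?_ (h2 x hx2)
    have : HasFDerivWithinAt f (ContinuousLinearMap.smulRight (1 : ℝ →L[ℝ] ℝ) (g x)) (Icc a b) x :=
      HasFDerivWithinAt.of_notMem_closure (by rwa [IsClosed.closure_eq isClosed_Icc])
    simpa using this.hasDerivWithinAt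

lemma lipGlue {f : ℝ → ℝ} {L a b c : ℝ} (hab : a ≤ b) (hbc : b ≤ c)
    (h1 : ∀ x ∈ Icc a b, ∀ y ∈ Icc a b, |f x - f y| ≤ L * |x - y|)
    (h2 : ∀ x ∈ Icc b c, ∀ y ∈ Icc b c, |f x - f y| ≤ L * |x - y|) :
    ∀ x ∈ Icc a c, ∀ y ∈ Icc a c, |f x - f y| ≤ L * |x - y| := by
  have key : ∀ x ∈ Icc a c, ∀ y ∈ Icc a c, x ≤ y → |f x - f y| ≤ L * |x - y| := by
    rintro x ⟨hx1, hx2⟩ y ⟨hy1, hy2⟩ hxy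
    rcases le_or_gt y b with h | h
    · exact h1 x ⟨hx1, hxy.trans h⟩ y ⟨hy1, h⟩
    · rcases le_or_gt b x with h' | h'
      · exact h2 x ⟨h', hx2⟩ y ⟨h'.trans hxy, hy2⟩
      · have e1 := h1 x ⟨hx1, h'.le⟩ b ⟨hab, le_rfl⟩
        have e2 := h2 b ⟨le_rfl, hbc⟩ y ⟨h.le, hy2⟩
        have t1 : |x - b| = b - x := by rw [abs_of_nonpos (by linarith)]; ring
        have t2 : |b - y| = y - b := by rw [abs_of_nonpos (by linarith)]; ring
        have t3 : |x - y| = y - x := by rw [abs_of_nonpos (by linarith)]; ring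
        rw [t1] at e1; rw [t2] at e2; rw [t3]
        calc |f x - f y| ≤ |f x - f b| + |f b - f y| := abs_sub_le _ _ _
          _ ≤ L * (b - x) + L * (y - b) := by linarith
          _ = L * (y - x) := by ring
  intro x hx y hy
  rcases le_total x y with h | h
  · exact key x hx y hy h
  · rw [abs_sub_comm, abs_sub_comm x y]
    exact key y hy x hx h

section DerivFormulas
variable {m x : ℝ}

lemma hd_q2 : HasDerivAt (fun y : ℝ => (8 / m) * (y - m / 8) ^ 2 - 3 * m / 32)
    ((16 / m) * (x - m / 8)) x := by
  have h := (((hasDerivAt_id x).sub_const (m / 8)).pow 2).const_mul ((8:ℝ) / m)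
    |>.sub_const (3 * m / 32)
  refine h.congr_deriv ?_
  push_cast
  simp only [id_eq]
  ring

lemma hd_q5 : HasDerivAt (fun y : ℝ => (-8 / m) * (y - 7 * m / 8) ^ 2 + 19 * m / 32)
    ((-16 / m) * (x - 7 * m / 8)) x := by
  have h := (((hasDerivAt_id x).sub_const (7 * m / 8)).pow 2).const_mul ((-8:ℝ) / m)
    |>.add_const (19 * m / 32)
  refine h.congr_deriv ?_
  push_cast
  simp only [id_eq]
  ring

lemma hd_inv (hx : x ≠ m / 2) (a : ℝ) :
    HasDerivAt (fun y : ℝ => a / (y - m / 2)) (-a / (x - m / 2) ^ 2) x := by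
  have hne : x - m / 2 ≠ 0 := sub_ne_zero.2 hx
  have h1 : HasDerivAt (fun y : ℝ => y - m / 2) 1 x := (hasDerivAt_id x).sub_const _
  have h := (hasDerivAt_const x a).div h1 hne
  refine h.congr_deriv ?_
  field_simp
  ring

lemma hd_q3 (hx : x ≠ m / 2) :
    HasDerivAt (fun y : ℝ => -(5 * m / 16) * Real.exp ((5 * m / 16) / (y - m / 2) + 1) + m / 4)
      ((5 * m / 16) ^ 2 / (x - m / 2) ^ 2 * Real.exp ((5 * m / 16) / (x - m / 2) + 1)) x := by
  have hne : x - m / 2 ≠ 0 := sub_ne_zero.2 hx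
  have h := (((hd_inv hx (5 * m / 16)).add_const 1).exp).const_mul (-(5 * m / 16))
    |>.add_const (m / 4)
  refine h.congr_deriv ?_
  field_simp

lemma hd_q4 (hx : x ≠ m / 2) :
    HasDerivAt (fun y : ℝ => (5 * m / 16) * Real.exp (-(5 * m / 16) / (y - m / 2) + 1) + m / 4)
      ((5 * m / 16) ^ 2 / (x - m / 2) ^ 2 * Real.exp (-(5 * m / 16) / (x - m / 2) + 1)) x := by
  have hne : x - m / 2 ≠ 0 := sub_ne_zero.2 hx
  have h := (((hd_inv hx (-(5 * m / 16))).add_const 1).exp).const_mul (5 * m / 16)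
    |>.add_const (m / 4)
  refine h.congr_deriv ?_
  field_simp

end DerivFormulas
noncomputable def D3 (m x : ℝ) : ℝ :=
  -((5 * m / 16) ^ 2 * Real.exp ((5 * m / 16) / (x - m / 2) + 1) *
    (2 / (x - m / 2) ^ 3 + (5 * m / 16) / (x - m / 2) ^ 4))

noncomputable def D4 (m x : ℝ) : ℝ :=
  -((5 * m / 16) ^ 2 * Real.exp (-(5 * m / 16) / (x - m / 2) + 1) *
    (2 / (x - m / 2) ^ 3 - (5 * m / 16) / (x - m / 2) ^ 4))

section DerivG
variable {m x : ℝ}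

lemma hd_pow2 : HasDerivAt (fun y : ℝ => (y - m / 2) ^ 2) (2 * (x - m / 2)) x := by
  have h := ((hasDerivAt_id x).sub_const (m / 2)).pow 2
  refine h.congr_deriv ?_
  push_cast
  simp only [id_eq]
  ring

lemma hd_G3 (hx : x ≠ m / 2) :
    HasDerivAt (fun y : ℝ => (5 * m / 16) ^ 2 / (y - m / 2) ^ 2 *
      Real.exp ((5 * m / 16) / (y - m / 2) + 1)) (D3 m x) x := by
  have hne : x - m / 2 ≠ 0 := sub_ne_zero.2 hx
  have hfrac := (hasDerivAt_const x ((5 * m / 16) ^ 2)).div hd_pow2 (pow_ne_zero 2 hne)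
  have hexp := ((hd_inv hx (5 * m / 16)).add_const 1).exp
  have h := hfrac.mul hexp
  refine h.congr_deriv ?_
  rw [D3]
  simp only [Pi.div_apply]
  rw [show x - m / 2 = x - m/2 from rfl]
  generalize hgen : x - m / 2 = d at hne ⊢
  field_simp
  ring

lemma hd_G4 (hx : x ≠ m / 2) :
    HasDerivAt (fun y : ℝ => (5 * m / 16) ^ 2 / (y - m / 2) ^ 2 *
      Real.exp (-(5 * m / 16) / (y - m / 2) + 1)) (D4 m x) x := by
  have hne : x - m / 2 ≠ 0 := sub_ne_zero.2 hx
  have hfrac := (hasDerivAt_const x ((5 * m / 16) ^ 2)).div hd_pow2 (pow_ne_zero 2 hne)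
  have hexp := ((hd_inv hx (-(5 * m / 16))).add_const 1).exp
  have h := hfrac.mul hexp
  refine h.congr_deriv ?_
  rw [D4]
  simp only [Pi.div_apply]
  generalize hgen : x - m / 2 = d at hne ⊢
  field_simp
  ring

lemma D3_bound (hm : 0 < m) (hx : x ∈ Ico (3 * m / 16) (m / 2)) : |D3 m x| ≤ 2000 / m := by
  have hc : (0:ℝ) < 5 * m / 16 := by linarith
  have ht1 : x - m / 2 < 0 := by have := hx.2; simp only [mem_Ico] at hx; linarith [hx.2]
  have ht0 : -(5 * m / 16) ≤ x - m / 2 := by have := hx.1; linarith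
  have h := keyC hc ht0 ht1
  rw [D3, abs_neg, abs_mul, abs_of_pos (by positivity :
    (0:ℝ) < (5 * m / 16) ^ 2 * Real.exp ((5 * m / 16) / (x - m / 2) + 1))]
  calc (5 * m / 16) ^ 2 * Real.exp ((5 * m / 16) / (x - m / 2) + 1) *
        |2 / (x - m / 2) ^ 3 + (5 * m / 16) / (x - m / 2) ^ 4| ≤ 504 / (5 * m / 16) := h
    _ ≤ 2000 / m := by rw [div_le_div_iff₀ (by linarith) hm]; nlinarith

lemma D4_bound (hm : 0 < m) (hx : x ∈ Ioc (m / 2) (13 * m / 16)) : |D4 m x| ≤ 2000 / m := by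
  have hc : (0:ℝ) < 5 * m / 16 := by linarith
  simp only [mem_Ioc] at hx
  have ht1 : -(x - m / 2) < 0 := by linarith [hx.1]
  have ht0 : -(5 * m / 16) ≤ -(x - m / 2) := by linarith [hx.2]
  have h := keyC hc ht0 ht1
  have he1 : (5 * m / 16) / -(x - m / 2) = -(5 * m / 16) / (x - m / 2) := by
    rw [div_neg, neg_div]
  have he3 : (2:ℝ) / (-(x - m / 2)) ^ 3 + (5 * m / 16) / (-(x - m / 2)) ^ 4 =
      -(2 / (x - m / 2) ^ 3 - (5 * m / 16) / (x - m / 2) ^ 4) := by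
    rw [show (-(x - m / 2)) ^ 3 = -((x - m / 2) ^ 3) by ring,
      show (-(x - m / 2)) ^ 4 = (x - m / 2) ^ 4 by ring, div_neg]
    ring
  rw [he1, he3, abs_neg] at h
  rw [D4, abs_neg, abs_mul, abs_of_pos (by positivity :
    (0:ℝ) < (5 * m / 16) ^ 2 * Real.exp (-(5 * m / 16) / (x - m / 2) + 1))]
  calc (5 * m / 16) ^ 2 * Real.exp (-(5 * m / 16) / (x - m / 2) + 1) *
        |2 / (x - m / 2) ^ 3 - (5 * m / 16) / (x - m / 2) ^ 4| ≤ 504 / (5 * m / 16) := h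
    _ ≤ 2000 / m := by rw [div_le_div_iff₀ (by linarith) hm]; nlinarith
end DerivG
section PieceDeriv
variable {m : ℝ} (hm : 0 < m)
include hm

lemma P1d : ∀ x ∈ Icc 0 (m / 16), HasDerivWithinAt (f0 m) (g0 m x) (Icc 0 (m / 16)) x := by
  intro x hx
  rw [g0_P1 hm x hx]
  have h : HasDerivWithinAt (fun y : ℝ => -y) (-1) (Icc 0 (m / 16)) x := by
    exact (hasDerivAt_neg x).hasDerivWithinAt
  exact h.congr (f0_P1 hm) (f0_P1 hm x hx)

lemma P2d : ∀ x ∈ Icc (m / 16) (3 * m / 16),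
    HasDerivWithinAt (f0 m) (g0 m x) (Icc (m / 16) (3 * m / 16)) x := by
  intro x hx
  rw [g0_P2 hm x hx]
  exact (hd_q2.hasDerivWithinAt).congr (f0_P2 hm) (f0_P2 hm x hx)

lemma P3d : ∀ x ∈ Icc (3 * m / 16) (m / 2),
    HasDerivWithinAt (f0 m) (g0 m x) (Icc (3 * m / 16) (m / 2)) x := by
  intro x hx
  rcases hx.2.lt_or_eq with hlt | heq
  · rw [g0_eq3 hm hx.1 hlt]
    refine ((hd_q3 (ne_of_lt hlt)).hasDerivWithinAt).congr_of_eventuallyEq ?_ (f0_eq3 hm hx.1 hlt)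
    have hmem : Iio (m / 2) ∈ nhdsWithin x (Icc (3 * m / 16) (m / 2)) :=
      nhdsWithin_le_nhds (Iio_mem_nhds hlt)
    filter_upwards [hmem, self_mem_nhdsWithin] with y hy1 hy2
    exact f0_eq3 hm hy2.1 hy1
  · subst heq
    rw [g0_mid hm, hasDerivWithinAt_iff_isLittleO]
    have hc : (0:ℝ) < 5 * m / 16 := by linarith
    have hb : ∀ y ∈ Icc (3 * m / 16) (m / 2),
        ‖f0 m y - f0 m (m / 2) - (y - m / 2) • (0:ℝ)‖ ≤ (18 / (5 * m / 16)) * ‖(y - m / 2) ^ 2‖ := by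
      intro y hy
      rw [smul_zero, sub_zero, f0_mid hm, Real.norm_eq_abs, Real.norm_eq_abs,
        abs_of_nonneg (sq_nonneg (y - m / 2))]
      rcases hy.2.lt_or_eq with hy2 | hy2
      · rw [f0_eq3 hm hy.1 hy2,
          show -(5 * m / 16) * Real.exp ((5 * m / 16) / (y - m / 2) + 1) + m / 4 - m / 4
            = -((5 * m / 16) * Real.exp ((5 * m / 16) / (y - m / 2) + 1)) by ring, abs_neg,
          abs_of_pos (by positivity)]
        exact keyA hc (by linarith [hy.1]) (by linarith)
      · rw [hy2, f0_mid hm]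
        simp only [sub_self, abs_zero]
        positivity
    have hO : (fun y => f0 m y - f0 m (m / 2) - (y - m / 2) • (0:ℝ))
        =O[nhdsWithin (m / 2) (Icc (3 * m / 16) (m / 2))] (fun y => (y - m / 2) ^ 2) := by
      refine Asymptotics.IsBigO.of_bound (18 / (5 * m / 16)) ?_
      filter_upwards [self_mem_nhdsWithin] with y hy using hb y hy
    refine hO.trans_isLittleO ?_
    · have h1 : Filter.Tendsto (fun y : ℝ => y - m / 2)
          (nhdsWithin (m / 2) (Icc (3 * m / 16) (m / 2))) (nhds 0) := by
        apply tendsto_nhdsWithin_of_tendsto_nhds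
        have := ((continuous_id.sub continuous_const).tendsto (m / 2) :
          Filter.Tendsto (fun y : ℝ => y - m / 2) (nhds (m / 2)) (nhds (m / 2 - m / 2)))
        convert this using 2 <;> simp
      have h2 := (Asymptotics.isLittleO_one_iff ℝ).mpr h1
      have h3 := (Asymptotics.isBigO_refl (fun y : ℝ => y - m / 2)
        (nhdsWithin (m / 2) (Icc (3 * m / 16) (m / 2)))).mul_isLittleO h2
      simpa only [mul_one, ← pow_two] using h3

lemma P4d : ∀ x ∈ Icc (m / 2) (13 * m / 16),
    HasDerivWithinAt (f0 m) (g0 m x) (Icc (m / 2) (13 * m / 16)) x := by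
  intro x hx
  rcases hx.1.lt_or_eq with hlt | heq
  · rw [g0_P4 hm x ⟨hlt, hx.2⟩]
    refine ((hd_q4 (ne_of_gt hlt)).hasDerivWithinAt).congr_of_eventuallyEq ?_
      (f0_P4 hm x ⟨hlt, hx.2⟩)
    have hmem : Ioi (m / 2) ∈ nhdsWithin x (Icc (m / 2) (13 * m / 16)) :=
      nhdsWithin_le_nhds (Ioi_mem_nhds hlt)
    filter_upwards [hmem, self_mem_nhdsWithin] with y hy1 hy2
    exact f0_P4 hm y ⟨hy1, hy2.2⟩
  · subst heq
    rw [g0_mid hm, hasDerivWithinAt_iff_isLittleO]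
    have hc : (0:ℝ) < 5 * m / 16 := by linarith
    have hb : ∀ y ∈ Icc (m / 2) (13 * m / 16),
        ‖f0 m y - f0 m (m / 2) - (y - m / 2) • (0:ℝ)‖ ≤ (18 / (5 * m / 16)) * ‖(y - m / 2) ^ 2‖ := by
      intro y hy
      rw [smul_zero, sub_zero, f0_mid hm, Real.norm_eq_abs, Real.norm_eq_abs,
        abs_of_nonneg (sq_nonneg (y - m / 2))]
      rcases hy.1.lt_or_eq with hy1 | hy1
      · rw [f0_P4 hm y ⟨hy1, hy.2⟩,
          show (5 * m / 16) * Real.exp (-(5 * m / 16) / (y - m / 2) + 1) + m / 4 - m / 4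
            = (5 * m / 16) * Real.exp (-(5 * m / 16) / (y - m / 2) + 1) by ring,
          abs_of_pos (by positivity)]
        have h := keyA hc (show -(5 * m / 16) ≤ -(y - m / 2) by linarith [hy.2]) (by linarith)
        rw [show (5 * m / 16) / -(y - m / 2) = -(5 * m / 16) / (y - m / 2) by
          rw [div_neg, neg_div], neg_sq] at h
        exact h
      · rw [← hy1, f0_mid hm]
        simp only [sub_self, abs_zero]
        positivity
    have hO : (fun y => f0 m y - f0 m (m / 2) - (y - m / 2) • (0:ℝ))
        =O[nhdsWithin (m / 2) (Icc (m / 2) (13 * m / 16))] (fun y => (y - m / 2) ^ 2) := by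
      refine Asymptotics.IsBigO.of_bound (18 / (5 * m / 16)) ?_
      filter_upwards [self_mem_nhdsWithin] with y hy using hb y hy
    refine hO.trans_isLittleO ?_
    · have h1 : Filter.Tendsto (fun y : ℝ => y - m / 2)
          (nhdsWithin (m / 2) (Icc (m / 2) (13 * m / 16))) (nhds 0) := by
        apply tendsto_nhdsWithin_of_tendsto_nhds
        have := ((continuous_id.sub continuous_const).tendsto (m / 2) :
          Filter.Tendsto (fun y : ℝ => y - m / 2) (nhds (m / 2)) (nhds (m / 2 - m / 2)))
        convert this using 2 <;> simp
      have h2 := (Asymptotics.isLittleO_one_iff ℝ).mpr h1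
      have h3 := (Asymptotics.isBigO_refl (fun y : ℝ => y - m / 2)
        (nhdsWithin (m / 2) (Icc (m / 2) (13 * m / 16)))).mul_isLittleO h2
      simpa only [mul_one, ← pow_two] using h3

lemma P5d : ∀ x ∈ Icc (13 * m / 16) (15 * m / 16),
    HasDerivWithinAt (f0 m) (g0 m x) (Icc (13 * m / 16) (15 * m / 16)) x := by
  intro x hx
  rw [g0_P5 hm x hx]
  exact (hd_q5.hasDerivWithinAt).congr (f0_P5 hm) (f0_P5 hm x hx)

lemma P6d : ∀ x ∈ Icc (15 * m / 16) m,
    HasDerivWithinAt (f0 m) (g0 m x) (Icc (15 * m / 16) m) x := by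
  intro x hx
  rw [g0_P6 hm x hx]
  have h : HasDerivWithinAt (fun y : ℝ => -y + 3 * m / 2) (-1) (Icc (15 * m / 16) m) x := by
    simpa using (((hasDerivAt_id x).neg).add_const (3 * m / 2)).hasDerivWithinAt
  exact h.congr (f0_P6 hm) (f0_P6 hm x hx)

lemma derivAll : ∀ x ∈ Icc 0 m, HasDerivWithinAt (f0 m) (g0 m x) (Icc 0 m) x := by
  have h12 := derivGlue (by linarith) (by linarith) (P1d hm) (P2d hm)
  have h13 := derivGlue (by linarith) (by linarith) h12 (P3d hm)
  have h14 := derivGlue (by linarith) (by linarith) h13 (P4d hm)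
  have h15 := derivGlue (by linarith) (by linarith) h14 (P5d hm)
  exact derivGlue (by linarith) (by linarith) h15 (P6d hm)
end PieceDeriv
section Lip
variable {m : ℝ} (hm : 0 < m)
include hm

lemma lip1 : ∀ x ∈ Icc 0 (m / 16), ∀ y ∈ Icc 0 (m / 16),
    |g0 m x - g0 m y| ≤ (2000 / m) * |x - y| := by
  intro x hx y hy
  rw [g0_P1 hm x hx, g0_P1 hm y hy, sub_self, abs_zero]
  positivity

lemma lip2 : ∀ x ∈ Icc (m / 16) (3 * m / 16), ∀ y ∈ Icc (m / 16) (3 * m / 16),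
    |g0 m x - g0 m y| ≤ (2000 / m) * |x - y| := by
  intro x hx y hy
  rw [g0_P2 hm x hx, g0_P2 hm y hy,
    show (16 / m) * (x - m / 8) - (16 / m) * (y - m / 8) = (16 / m) * (x - y) by ring,
    abs_mul, abs_of_pos (by positivity : (0:ℝ) < 16 / m)]
  have h : (16:ℝ) / m ≤ 2000 / m := by
    rw [div_le_div_iff₀ hm hm]; nlinarith
  exact mul_le_mul_of_nonneg_right h (abs_nonneg _)

lemma lip3aux : ∀ x ∈ Ico (3 * m / 16) (m / 2),
    |g0 m x - g0 m (m / 2)| ≤ (2000 / m) * |x - m / 2| := by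
  intro x hx
  have hc : (0:ℝ) < 5 * m / 16 := by linarith
  rw [g0_mid hm, sub_zero, g0_eq3 hm hx.1 hx.2, abs_of_pos (mul_pos (div_pos
    (pow_pos hc 2) (sq_pos_of_ne_zero (sub_ne_zero.2 (ne_of_lt hx.2)))) (Real.exp_pos _))]
  have h := keyB hc (show -(5 * m / 16) ≤ x - m / 2 by have := hx.1; linarith)
    (by have := hx.2; linarith)
  calc (5 * m / 16) ^ 2 / (x - m / 2) ^ 2 * Real.exp ((5 * m / 16) / (x - m / 2) + 1)
      ≤ 72 / (5 * m / 16) * (-(x - m / 2)) := h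
    _ ≤ (2000 / m) * |x - m / 2| := by
        rw [abs_of_neg (by have := hx.2; linarith : x - m / 2 < 0)]
        apply mul_le_mul_of_nonneg_right ?_ (by have := hx.2; linarith)
        rw [div_le_div_iff₀ (by linarith) hm]; nlinarith

lemma lip3 : ∀ x ∈ Icc (3 * m / 16) (m / 2), ∀ y ∈ Icc (3 * m / 16) (m / 2),
    |g0 m x - g0 m y| ≤ (2000 / m) * |x - y| := by
  have hIco : ∀ x ∈ Ico (3 * m / 16) (m / 2), ∀ y ∈ Ico (3 * m / 16) (m / 2),
      |g0 m x - g0 m y| ≤ (2000 / m) * |x - y| := by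
    intro x hx y hy
    have hG : ∀ z ∈ Ico (3 * m / 16) (m / 2),
        HasDerivWithinAt (fun w : ℝ => (5 * m / 16) ^ 2 / (w - m / 2) ^ 2 *
          Real.exp ((5 * m / 16) / (w - m / 2) + 1)) (D3 m z) (Ico (3 * m / 16) (m / 2)) z :=
      fun z hz => (hd_G3 (ne_of_lt hz.2)).hasDerivWithinAt
    have hbd : ∀ z ∈ Ico (3 * m / 16) (m / 2), ‖D3 m z‖ ≤ 2000 / m :=
      fun z hz => by rw [Real.norm_eq_abs]; exact D3_bound hm hz
    have key := Convex.norm_image_sub_le_of_norm_hasDerivWithin_le hG hbd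
      (convex_Ico _ _) hy hx
    rw [g0_eq3 hm hx.1 hx.2, g0_eq3 hm hy.1 hy.2]
    simpa [Real.norm_eq_abs] using key
  intro x hx y hy
  rcases hx.2.lt_or_eq with hx2 | hx2 <;> rcases hy.2.lt_or_eq with hy2 | hy2
  · exact hIco x ⟨hx.1, hx2⟩ y ⟨hy.1, hy2⟩
  · subst hy2; exact lip3aux hm x ⟨hx.1, hx2⟩
  · subst hx2
    rw [abs_sub_comm, abs_sub_comm (m / 2) y]
    exact lip3aux hm y ⟨hy.1, hy2⟩
  · subst hx2; rw [hy2, sub_self, abs_zero]; positivity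

lemma lip4aux : ∀ x ∈ Ioc (m / 2) (13 * m / 16),
    |g0 m x - g0 m (m / 2)| ≤ (2000 / m) * |x - m / 2| := by
  intro x hx
  have hc : (0:ℝ) < 5 * m / 16 := by linarith
  rw [g0_mid hm, sub_zero, g0_P4 hm x hx, abs_of_pos (mul_pos (div_pos
    (pow_pos hc 2) (sq_pos_of_ne_zero (sub_ne_zero.2 (ne_of_gt hx.1)))) (Real.exp_pos _))]
  have h := keyB hc (show -(5 * m / 16) ≤ -(x - m / 2) by have := hx.2; linarith)
    (by have := hx.1; linarith)
  rw [show (5 * m / 16) / -(x - m / 2) = -(5 * m / 16) / (x - m / 2) by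
    rw [div_neg, neg_div], neg_sq, neg_neg] at h
  calc (5 * m / 16) ^ 2 / (x - m / 2) ^ 2 * Real.exp (-(5 * m / 16) / (x - m / 2) + 1)
      ≤ 72 / (5 * m / 16) * (x - m / 2) := h
    _ ≤ (2000 / m) * |x - m / 2| := by
        rw [abs_of_pos (by have := hx.1; linarith : 0 < x - m / 2)]
        apply mul_le_mul_of_nonneg_right ?_ (by have := hx.1; linarith)
        rw [div_le_div_iff₀ (by linarith) hm]; nlinarith

lemma lip4 : ∀ x ∈ Icc (m / 2) (13 * m / 16), ∀ y ∈ Icc (m / 2) (13 * m / 16),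
    |g0 m x - g0 m y| ≤ (2000 / m) * |x - y| := by
  have hIoc : ∀ x ∈ Ioc (m / 2) (13 * m / 16), ∀ y ∈ Ioc (m / 2) (13 * m / 16),
      |g0 m x - g0 m y| ≤ (2000 / m) * |x - y| := by
    intro x hx y hy
    have hG : ∀ z ∈ Ioc (m / 2) (13 * m / 16),
        HasDerivWithinAt (fun w : ℝ => (5 * m / 16) ^ 2 / (w - m / 2) ^ 2 *
          Real.exp (-(5 * m / 16) / (w - m / 2) + 1)) (D4 m z) (Ioc (m / 2) (13 * m / 16)) z :=
      fun z hz => (hd_G4 (ne_of_gt hz.1)).hasDerivWithinAt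
    have hbd : ∀ z ∈ Ioc (m / 2) (13 * m / 16), ‖D4 m z‖ ≤ 2000 / m :=
      fun z hz => by rw [Real.norm_eq_abs]; exact D4_bound hm hz
    have key := Convex.norm_image_sub_le_of_norm_hasDerivWithin_le hG hbd
      (convex_Ioc _ _) hy hx
    rw [g0_P4 hm x hx, g0_P4 hm y hy]
    simpa [Real.norm_eq_abs] using key
  intro x hx y hy
  rcases hx.1.lt_or_eq with hx1 | hx1 <;> rcases hy.1.lt_or_eq with hy1 | hy1
  · exact hIoc x ⟨hx1, hx.2⟩ y ⟨hy1, hy.2⟩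
  · rw [← hy1]; exact lip4aux hm x ⟨hx1, hx.2⟩
  · rw [← hx1, abs_sub_comm, abs_sub_comm (m / 2) y]
    exact lip4aux hm y ⟨hy1, hy.2⟩
  · rw [← hx1, ← hy1, sub_self, abs_zero]; positivity

lemma lip5 : ∀ x ∈ Icc (13 * m / 16) (15 * m / 16), ∀ y ∈ Icc (13 * m / 16) (15 * m / 16),
    |g0 m x - g0 m y| ≤ (2000 / m) * |x - y| := by
  intro x hx y hy
  rw [g0_P5 hm x hx, g0_P5 hm y hy,
    show (-16 / m) * (x - 7 * m / 8) - (-16 / m) * (y - 7 * m / 8) = (-16 / m) * (x - y) by ring,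
    abs_mul, abs_of_neg (by apply div_neg_of_neg_of_pos <;> linarith : (-16:ℝ) / m < 0)]
  have h : -((-16:ℝ) / m) ≤ 2000 / m := by
    rw [show -((-16:ℝ) / m) = 16 / m by ring, div_le_div_iff₀ hm hm]; nlinarith
  exact mul_le_mul_of_nonneg_right h (abs_nonneg _)

lemma lip6 : ∀ x ∈ Icc (15 * m / 16) m, ∀ y ∈ Icc (15 * m / 16) m,
    |g0 m x - g0 m y| ≤ (2000 / m) * |x - y| := by
  intro x hx y hy
  rw [g0_P6 hm x hx, g0_P6 hm y hy, sub_self, abs_zero]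
  positivity

lemma lipAll : ∀ x ∈ Icc 0 m, ∀ y ∈ Icc 0 m,
    |g0 m x - g0 m y| ≤ (2000 / m) * |x - y| := by
  have h12 := lipGlue (by linarith) (by linarith) (lip1 hm) (lip2 hm)
  have h13 := lipGlue (by linarith) (by linarith) h12 (lip3 hm)
  have h14 := lipGlue (by linarith) (by linarith) h13 (lip4 hm)
  have h15 := lipGlue (by linarith) (by linarith) h14 (lip5 hm)
  exact lipGlue (by linarith) (by linarith) h15 (lip6 hm)

lemma lowerBound : ∀ x ∈ Icc 0 m, -(3 * m) / 32 ≤ f0 m x := by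
  rintro x ⟨hx0, hx1⟩
  rcases lt_or_ge x (m / 16) with h1 | h1
  · rw [f0_eq1 h1]; linarith
  rcases lt_or_ge x (3 * m / 16) with h2 | h2
  · rw [f0_eq2 h1 h2]
    have : 0 ≤ (8 / m) * (x - m / 8) ^ 2 := by positivity
    linarith
  rcases lt_or_ge x (m / 2) with h3 | h3
  · rw [f0_eq3 hm h2 h3]
    have ht : x - m / 2 < 0 := by linarith
    have hE1 : Real.exp ((5 * m / 16) / (x - m / 2) + 1) ≤ 1 := by
      rw [Real.exp_le_one_iff]
      have : (5 * m / 16) / (x - m / 2) ≤ -1 := by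
        rw [div_le_iff_of_neg ht]; linarith
      linarith
    have hE0 : 0 < Real.exp ((5 * m / 16) / (x - m / 2) + 1) := Real.exp_pos _
    nlinarith
  rcases eq_or_lt_of_le h3 with h4 | h4
  · rw [← h4, f0_mid hm]; linarith
  rcases lt_or_ge x (13 * m / 16) with h5 | h5
  · rw [f0_eq4 hm h4 h5]
    have := Real.exp_pos (-(5 * m / 16) / (x - m / 2) + 1)
    nlinarith
  rcases lt_or_ge x (15 * m / 16) with h6 | h6
  · rw [f0_eq5 hm h5 h6]
    have h7 : (x - 7 * m / 8) ^ 2 ≤ (m / 16) ^ 2 := by nlinarith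
    have h8 : (8 / m) * (x - 7 * m / 8) ^ 2 ≤ (8 / m) * (m / 16) ^ 2 :=
      mul_le_mul_of_nonneg_left h7 (by positivity)
    have h9 : (8 / m) * (m / 16) ^ 2 = m / 32 := by field_simp; ring
    have h10 : (-8 / m) * (x - 7 * m / 8) ^ 2 = -((8 / m) * (x - 7 * m / 8) ^ 2) := by ring
    rw [h10]
    linarith
  · rw [f0_eq6 hm h6]; linarith
end Lip

/-- `f₀` is continuous and differentiable on `[0, m]` (one-sided derivatives at the
endpoints), with derivative `−1` at `0` and at `m`, is bounded below by `−3m/32`, and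
its derivative is Lipschitz continuous on `[0, m]`. -/
theorem f0_properties (m : ℝ) (hm : 0 < m) :
    ContinuousOn (f0 m) (Icc 0 m) ∧
    (∃ f0' : ℝ → ℝ,
      (∀ x ∈ Icc 0 m, HasDerivWithinAt (f0 m) (f0' x) (Icc 0 m) x) ∧
      f0' 0 = -1 ∧ f0' m = -1 ∧
      (∃ L : ℝ, 0 ≤ L ∧ ∀ x ∈ Icc 0 m, ∀ y ∈ Icc 0 m,
        |f0' x - f0' y| ≤ L * |x - y|)) ∧
    (∀ x ∈ Icc 0 m, -(3 * m) / 32 ≤ f0 m x) := by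
  refine ⟨fun x hx => (derivAll hm x hx).continuousWithinAt,
    ⟨g0 m, derivAll hm, ?_, ?_, ⟨2000 / m, by positivity, lipAll hm⟩⟩, lowerBound hm⟩
  · exact g0_eq1 (by linarith)
  · exact g0_P6 hm m ⟨by linarith, le_rfl⟩
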